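/- Let E be a directed graph in which no cycle has an entrance, let x ∈ E^∞ be an infinite path whose edges x(0), x(1), … are pairwise distinct, and let F : E^∞ → ℤ be continuous with compact support. Then there exists N ∈ ℕ such that F(σ^k(x)) = 0 for all k ≥ N. -/
import Mathlib


/-- An infinite path in the directed graph with edge set `E` and
range/source maps `r, s : E → V`. -/
def IsInfinitePath {V E : Type*} (r s : E → V) (x : ℕ → E) : Prop :=
  ∀ i : ℕ, s (x i) = r (x (i + 1))

/-- `e 0, …, e (p-1)` is a cycle of length `p ≥ 1`. -/
def IsCycle {V E : Type*} (r s : E → V) (p : ℕ) (e : ℕ → E) : Prop :=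
  1 ≤ p ∧ (∀ i : ℕ, i + 1 < p → s (e i) = r (e (i + 1))) ∧ s (e (p - 1)) = r (e 0)

/-- The cycle `e 0, …, e (p-1)` has an entrance. -/
def CycleHasEntrance {V E : Type*} (r s : E → V) (p : ℕ) (e : ℕ → E) : Prop :=
  ∃ i < p, ∃ f : E, f ≠ e i ∧ r f = r (e i)

/-- No cycle in the graph has an entrance. -/
def NoCycleHasEntrance {V E : Type*} (r s : E → V) : Prop :=
  ∀ (p : ℕ) (e : ℕ → E), IsCycle r s p e → ¬ CycleHasEntrance r s p e

/-- The shift map on the infinite path space `E^∞`. -/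
def shiftPath {V E : Type*} (r s : E → V)
    (x : {z : ℕ → E // IsInfinitePath r s z}) :
    {z : ℕ → E // IsInfinitePath r s z} :=
  ⟨fun i => x.val (i + 1), fun i => x.property (i + 1)⟩

lemma shiftPath_iterate_val {V E : Type*} (r s : E → V)
    (x : {z : ℕ → E // IsInfinitePath r s z}) (k i : ℕ) :
    ((shiftPath r s)^[k] x).val i = x.val (i + k) := by
  induction k generalizing x i with
  | zero => rfl
  | succ n ih =>
      rw [Function.iterate_succ_apply, ih]
      show x.val (i + n + 1) = _
      ring_nf

/-- If no cycle has an entrance and `x ∈ E^∞` has pairwise distinct edges,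
then any `F ∈ C_c(E^∞, ℤ)` vanishes on `σ^k(x)` for all large `k`. -/
theorem compactSupport_vanishes_along_injective_path
    {V E : Type*} [TopologicalSpace E] [DiscreteTopology E]
    (r s : E → V) (hnc : NoCycleHasEntrance r s)
    (x : {z : ℕ → E // IsInfinitePath r s z})
    (hinj : Function.Injective x.val)
    (F : {z : ℕ → E // IsInfinitePath r s z} → ℤ)
    (hFcont : Continuous F) (hFsupp : HasCompactSupport F) :
    ∃ N : ℕ, ∀ k : ℕ, N ≤ k → F ((shiftPath r s)^[k] x) = 0 := by
  -- projection to coordinate 0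
  have hπ : Continuous fun z : {z : ℕ → E // IsInfinitePath r s z} => z.val 0 :=
    (continuous_apply 0).comp continuous_subtype_val
  have hSfin : ((fun z : {z : ℕ → E // IsInfinitePath r s z} => z.val 0) ''
      tsupport F).Finite := (hFsupp.image hπ).finite_of_discrete
  have hfin : (x.val ⁻¹' ((fun z : {z : ℕ → E // IsInfinitePath r s z} => z.val 0) ''
      tsupport F)).Finite := hSfin.preimage hinj.injOn
  obtain ⟨b, hb⟩ := hfin.bddAbove
  refine ⟨b + 1, fun k hk => ?_⟩
  by_contra hFk
  have hmem : (shiftPath r s)^[k] x ∈ tsupport F :=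
    subset_tsupport F (by simpa using hFk)
  have hx : x.val k ∈ (fun z : {z : ℕ → E // IsInfinitePath r s z} => z.val 0) ''
      tsupport F := ⟨_, hmem, by simpa using shiftPath_iterate_val r s x k 0⟩
  have := hb hx
  omega
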